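/- Let A be a unital complex Banach algebra, M a unital A-bimodule, n ≥ 3, and let Δ be a 2-local derivation from M_n(A) into M_n(M) that vanishes on the set D_n(A) of diagonal matrices and on the linear span of the matrix units {e_{ij}}_{i,j=1}^n. Then for every x ∈ M_n(A) and all k ≠ s, the (k,s)-entry of Δ(x) is zero: Δ(x)_{ks} = 0. -/

import Mathlib

open MulOpposite Matrix

variable (A M : Type*) [NormedRing A] [NormedAlgebra ℂ A] [CompleteSpace A]
  [AddCommGroup M] [Module ℂ M] [Module A M] [Module Aᵐᵒᵖ M]
  [SMulCommClass A Aᵐᵒᵖ M] [IsScalarTower ℂ A M] [IsScalarTower ℂ Aᵐᵒᵖ M]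

/-- `D : A → M` is a derivation from the Banach algebra `A` into the unital
`A`-bimodule `M`: a `ℂ`-linear map with the Leibniz rule (the right action of
`A` on `M` is written via `Aᵐᵒᵖ`). -/
def IsDerivation (D : A → M) : Prop :=
  IsLinearMap ℂ D ∧ ∀ x y : A, D (x * y) = op y • D x + x • D y

variable {n : ℕ}

/-- The left action of `Mₙ(A)` on `Mₙ(M)`: `(x · Y)_{ij} = Σ_k x_{ik} · Y_{kj}`. -/
def matL (x : Matrix (Fin n) (Fin n) A) (Y : Matrix (Fin n) (Fin n) M) :
    Matrix (Fin n) (Fin n) M :=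
  Matrix.of fun i j => ∑ k, x i k • Y k j

/-- The right action of `Mₙ(A)` on `Mₙ(M)`: `(Y · x)_{ij} = Σ_k Y_{ik} · x_{kj}`. -/
def matR (Y : Matrix (Fin n) (Fin n) M) (x : Matrix (Fin n) (Fin n) A) :
    Matrix (Fin n) (Fin n) M :=
  Matrix.of fun i j => ∑ k, op (x k j) • Y i k

/-- A derivation from `Mₙ(A)` into the `Mₙ(A)`-bimodule `Mₙ(M)`. -/
def IsMatDerivation (D : Matrix (Fin n) (Fin n) A → Matrix (Fin n) (Fin n) M) : Prop :=
  IsLinearMap ℂ D ∧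
    ∀ x y : Matrix (Fin n) (Fin n) A, D (x * y) = matR A M (D x) y + matL A M x (D y)

/-- A 2-local derivation from `Mₙ(A)` into `Mₙ(M)`: for each pair of points there
is a derivation agreeing with `Δ` at both of them. -/
def Is2LocalMatDerivation (Δ : Matrix (Fin n) (Fin n) A → Matrix (Fin n) (Fin n) M) : Prop :=
  ∀ x y : Matrix (Fin n) (Fin n) A,
    ∃ D : Matrix (Fin n) (Fin n) A → Matrix (Fin n) (Fin n) M,
      IsMatDerivation A M D ∧ Δ x = D x ∧ Δ y = D y

/-- The matrix unit `e_{ij}`: the unit of `A` at position `(i,j)`, zeros elsewhere. -/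
def matUnit (i j : Fin n) : Matrix (Fin n) (Fin n) A :=
  Matrix.single i j 1

/-- The linear span of the matrix units `{e_{ij}}`. -/
noncomputable def unitSpan (n : ℕ) : Submodule ℂ (Matrix (Fin n) (Fin n) A) :=
  Submodule.span ℂ (Set.range fun p : Fin n × Fin n => Matrix.single p.1 p.2 (1 : A))

/-- The set `Dₙ(A)` of diagonal matrices in `Mₙ(A)`. -/
def diagSet (n : ℕ) : Set (Matrix (Fin n) (Fin n) A) :=
  {x | ∀ i j : Fin n, i ≠ j → x i j = 0}

/-! ### Auxiliary machinery for the proof of Statement 13. -/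

section Aux
set_option linter.unusedSectionVars false

variable {A M}
variable {Δ D : Matrix (Fin n) (Fin n) A → Matrix (Fin n) (Fin n) M}

/-- Entry formula for `matL` applied to a standard basis matrix. -/
lemma matL_std_apply (i j a b : Fin n) (v : A) (Y : Matrix (Fin n) (Fin n) M) :
    matL A M (Matrix.single i j v) Y a b = if i = a then v • Y j b else 0 := by
  classical
  simp only [matL, Matrix.of_apply]
  rw [Finset.sum_eq_single j]
  · by_cases h : i = a <;> simp [Matrix.single, Matrix.of_apply, h]
  · intro l _ hl
    rw [Matrix.single_apply_of_col_ne _ _ (Ne.symm hl), zero_smul]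
  · intro h; exact absurd (Finset.mem_univ j) h

/-- Entry formula for `matR` applied to a standard basis matrix. -/
lemma matR_std_apply (i j a b : Fin n) (v : A) (Y : Matrix (Fin n) (Fin n) M) :
    matR A M Y (Matrix.single i j v) a b = if j = b then op v • Y a i else 0 := by
  classical
  simp only [matR, Matrix.of_apply]
  rw [Finset.sum_eq_single i]
  · by_cases h : j = b <;> simp [Matrix.single, Matrix.of_apply, h]
  · intro l _ hl
    rw [Matrix.single_apply_of_row_ne (Ne.symm hl), op_zero, zero_smul]
  · intro h; exact absurd (Finset.mem_univ i) h

lemma matR_zero_left (x : Matrix (Fin n) (Fin n) A) :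
    matR A M (0 : Matrix (Fin n) (Fin n) M) x = 0 := by
  ext i j; simp [matR, Matrix.of_apply]

lemma matL_zero_right (x : Matrix (Fin n) (Fin n) A) :
    matL A M x (0 : Matrix (Fin n) (Fin n) M) = 0 := by
  ext i j; simp [matL, Matrix.of_apply]

lemma matL_add_left (x x' : Matrix (Fin n) (Fin n) A) (Y : Matrix (Fin n) (Fin n) M) :
    matL A M (x + x') Y = matL A M x Y + matL A M x' Y := by
  ext i j
  simp only [matL, Matrix.of_apply, Matrix.add_apply]
  rw [← Finset.sum_add_distrib]
  exact Finset.sum_congr rfl fun l _ => by rw [add_smul]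

lemma matR_add_right (Y : Matrix (Fin n) (Fin n) M) (x x' : Matrix (Fin n) (Fin n) A) :
    matR A M Y (x + x') = matR A M Y x + matR A M Y x' := by
  ext i j
  simp only [matR, Matrix.of_apply, Matrix.add_apply]
  rw [← Finset.sum_add_distrib]
  exact Finset.sum_congr rfl fun l _ => by rw [op_add, add_smul]

lemma der_add (hD : IsMatDerivation A M D) (x y : Matrix (Fin n) (Fin n) A) :
    D (x + y) = D x + D y := hD.1.map_add x y

lemma der_smul (hD : IsMatDerivation A M D) (c : ℂ) (x : Matrix (Fin n) (Fin n) A) :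
    D (c • x) = c • D x := hD.1.map_smul c x

lemma der_sub (hD : IsMatDerivation A M D) (x y : Matrix (Fin n) (Fin n) A) :
    D (x - y) = D x - D y := by
  have := (IsLinearMap.mk' D hD.1).map_sub x y
  simpa using this

lemma der_zero (hD : IsMatDerivation A M D) : D 0 = 0 := by
  have := (IsLinearMap.mk' D hD.1).map_zero
  simpa using this

lemma der_sum (hD : IsMatDerivation A M D) {ι : Type*} (s : Finset ι)
    (f : ι → Matrix (Fin n) (Fin n) A) :
    D (∑ i ∈ s, f i) = ∑ i ∈ s, D (f i) := by
  have h := map_sum (IsLinearMap.mk' D hD.1) f s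
  simp only [IsLinearMap.mk'_apply] at h
  exact h

/-- Position lemma: for any derivation `D`, the value `D (v e_{ij})` is supported
on row `i` and column `j`. -/
lemma der_std_apply_ne (hD : IsMatDerivation A M D) {i j a b : Fin n}
    (ha : a ≠ i) (hb : b ≠ j) (v : A) :
    D (Matrix.single i j v) a b = 0 := by
  have h := hD.2 (Matrix.single i i (1 : A)) (Matrix.single i j v)
  rw [Matrix.single_mul_single_same, one_mul] at h
  rw [h, Matrix.add_apply, matR_std_apply, matL_std_apply,
    if_neg (Ne.symm hb), if_neg (Ne.symm ha), add_zero]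

/-- Row transfer: `D (v e_{aj})_{a b} = D (v e_{jj})_{j b}` for `b ≠ j`. -/
lemma der_transfer_row (hD : IsMatDerivation A M D) {a j b : Fin n} (hb : b ≠ j) (v : A) :
    D (Matrix.single a j v) a b = D (Matrix.single j j v) j b := by
  have h := hD.2 (Matrix.single a j (1 : A)) (Matrix.single j j v)
  rw [Matrix.single_mul_single_same, one_mul] at h
  rw [h, Matrix.add_apply, matR_std_apply, matL_std_apply,
    if_neg (Ne.symm hb), if_pos rfl, zero_add, one_smul]

/-- Column transfer: `D (v e_{ib})_{a b} = D (v e_{ii})_{a i}` for `a ≠ i`. -/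
lemma der_transfer_col (hD : IsMatDerivation A M D) {i b a : Fin n} (ha : a ≠ i) (v : A) :
    D (Matrix.single i b v) a b = D (Matrix.single i i v) a i := by
  have h := hD.2 (Matrix.single i i v) (Matrix.single i b (1 : A))
  rw [Matrix.single_mul_single_same, mul_one] at h
  rw [h, Matrix.add_apply, matR_std_apply, matL_std_apply,
    if_pos rfl, if_neg (Ne.symm ha), add_zero, op_one, one_smul]

/-- If every nonzero entry of `m` avoids row `k` and column `s`, then
`(D m)_{ks} = 0` for every derivation `D`. -/
lemma der_entry_zero (hD : IsMatDerivation A M D) {k s : Fin n}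
    (m : Matrix (Fin n) (Fin n) A)
    (hm : ∀ i j, m i j ≠ 0 → i ≠ k ∧ j ≠ s) : D m k s = 0 := by
  classical
  conv_lhs => rw [Matrix.matrix_eq_sum_single m]
  rw [der_sum hD, Matrix.sum_apply]
  apply Finset.sum_eq_zero
  intro i _
  rw [der_sum hD, Matrix.sum_apply]
  apply Finset.sum_eq_zero
  intro j _
  by_cases h : m i j = 0
  · rw [h, Matrix.single_zero, der_zero hD, Matrix.zero_apply]
  · exact der_std_apply_ne hD (Ne.symm (hm i j h).1) (Ne.symm (hm i j h).2) _

/-- Master link: modifying `z` away from row `k` and column `s` does not change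
`(Δ z)_{ks}`. -/
lemma link_entry (hΔ : Is2LocalMatDerivation A M Δ) {k s : Fin n}
    (z z' : Matrix (Fin n) (Fin n) A)
    (h : ∀ i j, z i j ≠ z' i j → i ≠ k ∧ j ≠ s) : Δ z k s = Δ z' k s := by
  obtain ⟨D, hD, h1, h2⟩ := hΔ z z'
  have hm : D (z - z') k s = 0 := by
    apply der_entry_zero hD
    intro i j hij
    refine h i j (sub_ne_zero.mp ?_)
    rwa [Matrix.sub_apply] at hij
  rw [der_sub hD, Matrix.sub_apply, ← h1, ← h2] at hm
  exact sub_eq_zero.mp hm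

/-- Lemma A: if `z a b = 0` (with `a ≠ b`) then `(Δ z)_{ab} = 0`. -/
lemma lemA (hΔ : Is2LocalMatDerivation A M Δ)
    (hdiag : ∀ x ∈ diagSet A n, Δ x = 0)
    {a b : Fin n} (hab : a ≠ b) (z : Matrix (Fin n) (Fin n) A) (hz : z a b = 0) :
    Δ z a b = 0 := by
  classical
  set ea := Matrix.single a a (1 : A) with hea
  set eb := Matrix.single b b (1 : A) with heb
  obtain ⟨D, hD, h1, h2⟩ := hΔ z (ea + (2 : ℂ) • eb)
  have hy0 : D (ea + (2 : ℂ) • eb) = 0 := by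
    rw [← h2]
    apply hdiag
    intro i j hij
    have e1 : ea i j = 0 := by
      apply Matrix.single_apply_of_ne
      rintro ⟨rfl, rfl⟩; exact hij rfl
    have e2 : eb i j = 0 := by
      apply Matrix.single_apply_of_ne
      rintro ⟨rfl, rfl⟩; exact hij rfl
    simp [Matrix.add_apply, Matrix.smul_apply, e1, e2]
  have hyy : (ea + (2 : ℂ) • eb) * (ea + (2 : ℂ) • eb) = ea + (4 : ℂ) • eb := by
    rw [hea, heb, Matrix.smul_single, Matrix.smul_single]
    rw [add_mul, mul_add, mul_add]
    rw [Matrix.single_mul_single_same, Matrix.single_mul_single_of_ne (h := hab),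
      Matrix.single_mul_single_of_ne (h := Ne.symm hab), Matrix.single_mul_single_same]
    rw [one_mul, add_zero, zero_add]
    congr 1
    have : ((2 : ℂ) • (1 : A)) * ((2 : ℂ) • (1 : A)) = (4 : ℂ) • (1 : A) := by
      rw [smul_mul_smul_comm, one_mul]
      norm_num
    rw [this]
  have hDyy : D ((ea + (2 : ℂ) • eb) * (ea + (2 : ℂ) • eb)) = 0 := by
    rw [hD.2, hy0, matR_zero_left, matL_zero_right, add_zero]
  have hsum4 : D ea + (4 : ℂ) • D eb = 0 := by
    have h' := hDyy
    rw [hyy, der_add hD, der_smul hD] at h'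
    exact h'
  have hsum2 : D ea + (2 : ℂ) • D eb = 0 := by
    have h' := hy0
    rw [der_add hD, der_smul hD] at h'
    exact h'
  have hDeb : D eb = 0 := by
    have hdiff : (2 : ℂ) • D eb = 0 := by
      have h4 : (4 : ℂ) • D eb - (2 : ℂ) • D eb = 0 := by
        have h5 := congrArg₂ (· - ·) hsum4 hsum2
        simpa [add_sub_add_left_eq_sub] using h5
      calc (2 : ℂ) • D eb = ((4 : ℂ) - 2) • D eb := by norm_num
        _ = (4 : ℂ) • D eb - (2 : ℂ) • D eb := sub_smul _ _ _
        _ = 0 := h4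
    have h5 : (2⁻¹ : ℂ) • ((2 : ℂ) • D eb) = 0 := by rw [hdiff, smul_zero]
    rwa [smul_smul, show (2⁻¹ * 2 : ℂ) = 1 by norm_num, one_smul] at h5
  have hDea : D ea = 0 := by
    have h' := hsum2
    rw [hDeb, smul_zero, add_zero] at h'
    exact h'
  have hprod : ea * (z * eb) = 0 := by
    ext i j
    rw [Matrix.zero_apply]
    by_cases hi : i = a
    · rw [hi, hea, Matrix.single_mul_apply_same, one_mul]
      by_cases hj : j = b
      · rw [hj, heb, Matrix.mul_single_apply_same, hz, zero_mul]
      · rw [heb, Matrix.mul_single_apply_of_ne (hbj := hj)]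
    · rw [hea, Matrix.single_mul_apply_of_ne (h := hi)]
  have hstep : (0 : Matrix (Fin n) (Fin n) M) = matL A M ea (matR A M (D z) eb) := by
    have e0 : D (ea * (z * eb)) = 0 := by rw [hprod, der_zero hD]
    have e1 : D (ea * (z * eb)) = matR A M (D ea) (z * eb) + matL A M ea (D (z * eb)) :=
      hD.2 _ _
    have e2 : D (z * eb) = matR A M (D z) eb + matL A M z (D eb) := hD.2 _ _
    rw [e2, hDeb, matL_zero_right, add_zero] at e1
    rw [hDea, matR_zero_left, zero_add] at e1
    rw [← e1, e0]
  have hfin := congrFun (congrFun hstep a) b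
  rw [Matrix.zero_apply, hea, heb, matL_std_apply, if_pos rfl, one_smul,
    matR_std_apply, if_pos rfl, op_one, one_smul] at hfin
  rw [h1]
  exact hfin.symm

/-- Paired move clearing an entry in row `k` (at column `j`, `j ∉ {k,s}`). -/
lemma relPM_row (hΔ : Is2LocalMatDerivation A M Δ) {k s j : Fin n}
    (hjk : j ≠ k) (hjs : j ≠ s) (z : Matrix (Fin n) (Fin n) A) (v : A) :
    Δ z k s - Δ (z - (Matrix.single k j v + Matrix.single j j v)) k s
      = Δ z j s - Δ (z - (Matrix.single k j v + Matrix.single j j v)) j s := by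
  set m := Matrix.single k j v + Matrix.single j j v with hm
  obtain ⟨D, hD, h1, h2⟩ := hΔ z (z - m)
  have hDm : D m = Δ z - Δ (z - m) := by
    rw [h1, h2, ← der_sub hD, sub_sub_cancel]
  have hks : D m k s = D (Matrix.single j j v) j s := by
    rw [hm, der_add hD, Matrix.add_apply, der_transfer_row hD (Ne.symm hjs),
      der_std_apply_ne hD (Ne.symm hjk) (Ne.symm hjs), add_zero]
  have hjs2 : D m j s = D (Matrix.single j j v) j s := by
    rw [hm, der_add hD, Matrix.add_apply,
      der_std_apply_ne hD hjk (Ne.symm hjs), zero_add]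
  have e1 := congrFun (congrFun hDm k) s
  have e2 := congrFun (congrFun hDm j) s
  rw [Matrix.sub_apply] at e1 e2
  rw [← e1, ← e2, hks, hjs2]

/-- Paired move clearing an entry in column `s` (at row `i`, `i ∉ {k,s}`). -/
lemma relPM_col (hΔ : Is2LocalMatDerivation A M Δ) {k s i : Fin n}
    (hik : i ≠ k) (his : i ≠ s) (z : Matrix (Fin n) (Fin n) A) (v : A) :
    Δ z k s - Δ (z - (Matrix.single i s v + Matrix.single i i v)) k s
      = Δ z k i - Δ (z - (Matrix.single i s v + Matrix.single i i v)) k i := by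
  set m := Matrix.single i s v + Matrix.single i i v with hm
  obtain ⟨D, hD, h1, h2⟩ := hΔ z (z - m)
  have hDm : D m = Δ z - Δ (z - m) := by
    rw [h1, h2, ← der_sub hD, sub_sub_cancel]
  have hks : D m k s = D (Matrix.single i i v) k i := by
    rw [hm, der_add hD, Matrix.add_apply, der_transfer_col hD (Ne.symm hik),
      der_std_apply_ne hD (Ne.symm hik) (Ne.symm his), add_zero]
  have hki : D m k i = D (Matrix.single i i v) k i := by
    rw [hm, der_add hD, Matrix.add_apply,
      der_std_apply_ne hD (Ne.symm hik) his, zero_add]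
  have e1 := congrFun (congrFun hDm k) s
  have e2 := congrFun (congrFun hDm k) i
  rw [Matrix.sub_apply] at e1 e2
  rw [← e1, ← e2, hks, hki]

/-- Paired move clearing the `(k,k)` diagonal stub. -/
lemma relK (hΔ : Is2LocalMatDerivation A M Δ) {k s t : Fin n}
    (hks : k ≠ s) (hkt : k ≠ t) (z : Matrix (Fin n) (Fin n) A) (α : A) :
    Δ z k s - Δ (z - (Matrix.single k k α + Matrix.single t k α)) k s
      = Δ z t s - Δ (z - (Matrix.single k k α + Matrix.single t k α)) t s := by
  set m := Matrix.single k k α + Matrix.single t k α with hm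
  obtain ⟨D, hD, h1, h2⟩ := hΔ z (z - m)
  have hDm : D m = Δ z - Δ (z - m) := by
    rw [h1, h2, ← der_sub hD, sub_sub_cancel]
  have hks' : D m k s = D (Matrix.single k k α) k s := by
    rw [hm, der_add hD, Matrix.add_apply,
      der_std_apply_ne hD hkt (Ne.symm hks), add_zero]
  have hts' : D m t s = D (Matrix.single k k α) k s := by
    rw [hm, der_add hD, Matrix.add_apply,
      der_std_apply_ne hD (Ne.symm hkt) (Ne.symm hks),
      der_transfer_row hD (Ne.symm hks), zero_add]
  have e1 := congrFun (congrFun hDm k) s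
  have e2 := congrFun (congrFun hDm t) s
  rw [Matrix.sub_apply] at e1 e2
  rw [← e1, ← e2, hks', hts']

/-- Paired move clearing the `(s,s)` diagonal stub. -/
lemma relS (hΔ : Is2LocalMatDerivation A M Δ) {k s t : Fin n}
    (hks : k ≠ s) (hst : s ≠ t) (z : Matrix (Fin n) (Fin n) A) (β : A) :
    Δ z k s - Δ (z - (Matrix.single s s β + Matrix.single s t β)) k s
      = Δ z k t - Δ (z - (Matrix.single s s β + Matrix.single s t β)) k t := by
  set m := Matrix.single s s β + Matrix.single s t β with hm
  obtain ⟨D, hD, h1, h2⟩ := hΔ z (z - m)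
  have hDm : D m = Δ z - Δ (z - m) := by
    rw [h1, h2, ← der_sub hD, sub_sub_cancel]
  have hks' : D m k s = D (Matrix.single s s β) k s := by
    rw [hm, der_add hD, Matrix.add_apply,
      der_std_apply_ne hD hks hst, add_zero]
  have hkt' : D m k t = D (Matrix.single s s β) k s := by
    rw [hm, der_add hD, Matrix.add_apply,
      der_std_apply_ne hD hks (Ne.symm hst),
      der_transfer_col hD hks, zero_add]
  have e1 := congrFun (congrFun hDm k) s
  have e2 := congrFun (congrFun hDm k) t
  rw [Matrix.sub_apply] at e1 e2
  rw [← e1, ← e2, hks', hkt']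

/-- The single-entry case: `Δ (v e_{ks})_{ks} = 0`. -/
lemma single_entry (hΔ : Is2LocalMatDerivation A M Δ)
    (hdiag : ∀ x ∈ diagSet A n, Δ x = 0)
    (hvan : ∀ y ∈ unitSpan A n, Δ y = 0)
    {k s t : Fin n} (hks : k ≠ s) (hkt : k ≠ t) (hst : s ≠ t) (v : A) :
    Δ (Matrix.single k s v) k s = 0 := by
  classical
  set u : Matrix (Fin n) (Fin n) A := Matrix.single s t (1 : A) + Matrix.single t k 1
    with hu
  set g : Matrix (Fin n) (Fin n) A := Matrix.single k s v + u with hg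
  have hΔu : Δ u = 0 := by
    apply hvan
    exact Submodule.add_mem _ (Submodule.subset_span ⟨(s, t), rfl⟩)
      (Submodule.subset_span ⟨(t, k), rfl⟩)
  have hgg : g * g = Matrix.single k t v + Matrix.single s k 1 + Matrix.single t s v := by
    rw [hg, hu]
    simp only [add_mul, mul_add]
    rw [Matrix.single_mul_single_of_ne (h := Ne.symm hks), Matrix.single_mul_single_same,
      Matrix.single_mul_single_of_ne (h := hst), Matrix.single_mul_single_of_ne (h := Ne.symm hkt),
      Matrix.single_mul_single_of_ne (h := Ne.symm hst), Matrix.single_mul_single_same,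
      Matrix.single_mul_single_same, Matrix.single_mul_single_of_ne (h := hks),
      Matrix.single_mul_single_of_ne (h := hkt)]
    simp only [mul_one, one_mul]
    abel
  have hggg : g * (g * g)
      = Matrix.single k k v + Matrix.single s s v + Matrix.single t t v := by
    rw [hgg, hg, hu]
    simp only [add_mul, mul_add]
    rw [Matrix.single_mul_single_of_ne (h := Ne.symm hks), Matrix.single_mul_single_same,
      Matrix.single_mul_single_of_ne (h := hst), Matrix.single_mul_single_of_ne (h := Ne.symm hkt),
      Matrix.single_mul_single_of_ne (h := Ne.symm hst), Matrix.single_mul_single_same,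
      Matrix.single_mul_single_same, Matrix.single_mul_single_of_ne (h := hks),
      Matrix.single_mul_single_of_ne (h := hkt)]
    simp only [mul_one, one_mul]
    abel
  set G3 : Matrix (Fin n) (Fin n) A :=
    Matrix.single k k v + Matrix.single s s v + Matrix.single t t v with hG3
  have hΔG3 : Δ G3 = 0 := by
    apply hdiag
    intro i j hij
    have e1 : Matrix.single k k v i j = 0 := by
      apply Matrix.single_apply_of_ne; rintro ⟨rfl, rfl⟩; exact hij rfl
    have e2 : Matrix.single s s v i j = 0 := by
      apply Matrix.single_apply_of_ne; rintro ⟨rfl, rfl⟩; exact hij rfl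
    have e3 : Matrix.single t t v i j = 0 := by
      apply Matrix.single_apply_of_ne; rintro ⟨rfl, rfl⟩; exact hij rfl
    simp [hG3, Matrix.add_apply, e1, e2, e3]
  -- Step (i): the (s,t) and (t,k) entries of Δ g vanish.
  have hWst : Δ g s t = 0 ∧ Δ g t k = 0 := by
    obtain ⟨D, hD, h1, h2⟩ := hΔ g u
    have hgu2 : g - u = Matrix.single k s v := by
      rw [hg]; exact add_sub_cancel_right _ _
    have hgu : D (Matrix.single k s v) = D g - D u := by
      rw [← hgu2, der_sub hD]
    have hDu : D u = 0 := by rw [← h2, hΔu]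
    constructor
    · have hPL := der_std_apply_ne hD (Ne.symm hks) (Ne.symm hst) v
      rw [hgu, hDu, sub_zero, ← h1] at hPL
      exact hPL
    · have hPL := der_std_apply_ne hD (Ne.symm hkt) hks v
      rw [hgu, hDu, sub_zero, ← h1] at hPL
      exact hPL
  -- Step (ii): the (k,s) entry of Δ g vanishes.
  have hWks : Δ g k s = 0 := by
    obtain ⟨D, hD, h1, h2⟩ := hΔ g G3
    have hzero : D (g * (g * g)) = 0 := by
      rw [hggg, ← h2, hΔG3]
    have hexp : D (g * (g * g)) = matR A M (D g) (g * g) + matL A M g (D (g * g)) :=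
      hD.2 _ _
    have hexp2 : D (g * g) = matR A M (D g) g + matL A M g (D g) := hD.2 g g
    have entry := congrFun (congrFun (hzero.symm.trans hexp) k) k
    rw [Matrix.zero_apply, Matrix.add_apply] at entry
    have hRterm : matR A M (D g) (g * g) k k = D g k s := by
      rw [hgg, matR_add_right, matR_add_right, Matrix.add_apply, Matrix.add_apply,
        matR_std_apply, matR_std_apply, matR_std_apply,
        if_neg (Ne.symm hkt), if_pos rfl, if_neg (Ne.symm hks), op_one, one_smul]
      rw [zero_add, add_zero]
    have hRsplit : ∀ (Y : Matrix (Fin n) (Fin n) M) (a b : Fin n), matR A M Y g a b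
        = matR A M Y (Matrix.single k s v) a b + matR A M Y (Matrix.single s t 1) a b
          + matR A M Y (Matrix.single t k 1) a b := by
      intro Y a b
      conv_lhs => rw [hg, hu]
      rw [matR_add_right, matR_add_right, Matrix.add_apply, Matrix.add_apply, add_assoc]
    have hLsplit : ∀ (Y : Matrix (Fin n) (Fin n) M) (a b : Fin n), matL A M g Y a b
        = matL A M (Matrix.single k s v) Y a b + matL A M (Matrix.single s t 1) Y a b
          + matL A M (Matrix.single t k 1) Y a b := by
      intro Y a b
      conv_lhs => rw [hg, hu]
      rw [matL_add_left, matL_add_left, Matrix.add_apply, Matrix.add_apply, add_assoc]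
    have hXsk : D (g * g) s k = 0 := by
      have hR : matR A M (D g) g s k = 0 := by
        rw [hRsplit, matR_std_apply, matR_std_apply, matR_std_apply,
          if_neg (Ne.symm hks), if_neg (Ne.symm hkt), if_pos rfl, op_one, one_smul]
        rw [zero_add, zero_add, ← h1, hWst.1]
      have hL : matL A M g (D g) s k = 0 := by
        rw [hLsplit, matL_std_apply, matL_std_apply, matL_std_apply,
          if_neg hks, if_pos rfl, if_neg (Ne.symm hst), one_smul]
        rw [zero_add, add_zero, ← h1, hWst.2]
      rw [hexp2, Matrix.add_apply, hR, hL, add_zero]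
    have hLterm : matL A M g (D (g * g)) k k = 0 := by
      rw [hLsplit, matL_std_apply, matL_std_apply, matL_std_apply,
        if_pos rfl, if_neg (Ne.symm hks), if_neg (Ne.symm hkt), hXsk, smul_zero]
      simp
    rw [hRterm, hLterm, add_zero] at entry
    rw [h1]
    exact entry.symm
  -- Step (iii): conclude for the single-entry matrix.
  obtain ⟨D2, hD2, hV, hg2⟩ := hΔ (Matrix.single k s v) g
  have hgu3 : g - Matrix.single k s v = u := by
    rw [hg]; exact add_sub_cancel_left _ _
  have hB : D2 u = Δ g - Δ (Matrix.single k s v) := by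
    rw [← hgu3, der_sub hD2, ← hg2, ← hV]
  have huu : u * u = Matrix.single s k (1 : A) := by
    rw [hu]
    simp only [add_mul, mul_add]
    rw [Matrix.single_mul_single_of_ne (h := Ne.symm hst), Matrix.single_mul_single_same,
      Matrix.single_mul_single_of_ne (h := hks), Matrix.single_mul_single_of_ne (h := hkt)]
    simp only [one_mul]
    abel
  have huuu : u * (u * u) = 0 := by
    rw [huu, hu, add_mul]
    rw [Matrix.single_mul_single_of_ne (h := Ne.symm hst), Matrix.single_mul_single_of_ne (h := hks)]
    rw [add_zero]
  have h0 : D2 (u * (u * u)) = 0 := by rw [huuu, der_zero hD2]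
  have hexp3 : D2 (u * (u * u)) = matR A M (D2 u) (u * u) + matL A M u (D2 (u * u)) :=
    hD2.2 _ _
  have entry := congrFun (congrFun (h0.symm.trans hexp3) k) k
  rw [Matrix.zero_apply, Matrix.add_apply] at entry
  have hRt : matR A M (D2 u) (u * u) k k = D2 u k s := by
    rw [huu, matR_std_apply, if_pos rfl, op_one, one_smul]
  have hLt : matL A M u (D2 (u * u)) k k = 0 := by
    have hsplit : matL A M u (D2 (u * u)) k k
        = matL A M (Matrix.single s t 1) (D2 (u * u)) k k
          + matL A M (Matrix.single t k 1) (D2 (u * u)) k k := by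
      conv_lhs => rw [hu]
      rw [matL_add_left, Matrix.add_apply]
    rw [hsplit, matL_std_apply, matL_std_apply,
      if_neg (Ne.symm hks), if_neg (Ne.symm hkt), add_zero]
  rw [hRt, hLt, add_zero] at entry
  rw [hB, Matrix.sub_apply, hWks, zero_sub] at entry
  exact neg_eq_zero.mp entry.symm

/-- The stub case: if all off-diagonal entries of `x` except possibly `(k,s)` vanish,
then `(Δ x)_{ks} = 0`. -/
lemma stub (hΔ : Is2LocalMatDerivation A M Δ)
    (hdiag : ∀ x ∈ diagSet A n, Δ x = 0)
    (hvan : ∀ y ∈ unitSpan A n, Δ y = 0)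
    {k s t : Fin n} (hks : k ≠ s) (hkt : k ≠ t) (hst : s ≠ t)
    (x : Matrix (Fin n) (Fin n) A)
    (hoff : ∀ i j : Fin n, i ≠ j → ¬(i = k ∧ j = s) → x i j = 0) :
    Δ x k s = 0 := by
  classical
  set α := x k k with hα
  set β := x s s with hβ
  set v := x k s with hv
  set mK : Matrix (Fin n) (Fin n) A := Matrix.single k k α + Matrix.single t k α with hmK
  set z2 := x - mK with hz2
  set mS : Matrix (Fin n) (Fin n) A := Matrix.single s s β + Matrix.single s t β with hmS
  set z3 := z2 - mS with hz3
  have hxts : x t s = 0 := by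
    apply hoff t s (Ne.symm hst)
    rintro ⟨h, _⟩; exact hkt h.symm
  have hxkt : x k t = 0 := by
    apply hoff k t hkt
    rintro ⟨_, h⟩; exact hst h.symm
  have hmKts : mK t s = 0 := by
    rw [hmK, Matrix.add_apply, Matrix.single_apply_of_col_ne _ _ hks,
      Matrix.single_apply_of_col_ne _ _ hks, add_zero]
  have hmKkt : mK k t = 0 := by
    rw [hmK, Matrix.add_apply, Matrix.single_apply_of_col_ne _ _ hkt,
      Matrix.single_apply_of_row_ne (Ne.symm hkt), add_zero]
  have hmSkt : mS k t = 0 := by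
    rw [hmS, Matrix.add_apply, Matrix.single_apply_of_row_ne (Ne.symm hks),
      Matrix.single_apply_of_row_ne (Ne.symm hks), add_zero]
  have hz2ts : z2 t s = 0 := by
    rw [hz2, Matrix.sub_apply, hxts, hmKts, sub_zero]
  have hz2kt : z2 k t = 0 := by
    rw [hz2, Matrix.sub_apply, hxkt, hmKkt, sub_zero]
  have hz3kt : z3 k t = 0 := by
    rw [hz3, Matrix.sub_apply, hz2kt, hmSkt, sub_zero]
  have e1 : Δ x k s = Δ z2 k s := by
    have rel := relK hΔ hks hkt x α
    rw [← hmK, ← hz2] at rel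
    have ha1 : Δ x t s = 0 := lemA hΔ hdiag (Ne.symm hst) x hxts
    have ha2 : Δ z2 t s = 0 := lemA hΔ hdiag (Ne.symm hst) z2 hz2ts
    rw [ha1, ha2, sub_zero] at rel
    exact sub_eq_zero.mp rel
  have e2 : Δ z2 k s = Δ z3 k s := by
    have rel := relS hΔ hks hst z2 β
    rw [← hmS, ← hz3] at rel
    have hb1 : Δ z2 k t = 0 := lemA hΔ hdiag hkt z2 hz2kt
    have hb2 : Δ z3 k t = 0 := lemA hΔ hdiag hkt z3 hz3kt
    rw [hb1, hb2, sub_zero] at rel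
    exact sub_eq_zero.mp rel
  have e3 : Δ z3 k s = Δ (Matrix.single k s v) k s := by
    apply link_entry hΔ
    intro i j hne
    by_contra hc
    apply hne
    have hrowk : ∀ j' : Fin n, z3 k j' = Matrix.single k s v k j' := by
      intro j'
      rw [hz3, hz2, Matrix.sub_apply, Matrix.sub_apply, hmK, hmS,
        Matrix.add_apply, Matrix.add_apply]
      rw [Matrix.single_apply_of_row_ne (Ne.symm hkt),
        Matrix.single_apply_of_row_ne (Ne.symm hks),
        Matrix.single_apply_of_row_ne (Ne.symm hks)]
      by_cases hj1 : j' = s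
      · subst hj1
        rw [Matrix.single_apply_of_col_ne _ _ hks, Matrix.single_apply_same, ← hv]
        abel
      · rw [Matrix.single_apply_of_col_ne _ _ (fun h => hj1 h.symm)]
        by_cases hj2 : j' = k
        · subst hj2
          rw [Matrix.single_apply_same, ← hα]
          abel
        · rw [Matrix.single_apply_of_col_ne _ _ (fun h => hj2 h.symm)]
          have hx0 : x k j' = 0 := by
            apply hoff k j' (fun h => hj2 h.symm)
            rintro ⟨_, h2⟩; exact hj1 h2
          rw [hx0]
          abel
    have hcols : ∀ i' : Fin n, i' ≠ k → z3 i' s = Matrix.single k s v i' s := by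
      intro i' hik2
      rw [hz3, hz2, Matrix.sub_apply, Matrix.sub_apply, hmK, hmS,
        Matrix.add_apply, Matrix.add_apply]
      rw [Matrix.single_apply_of_col_ne _ _ hks, Matrix.single_apply_of_col_ne _ _ hks,
        Matrix.single_apply_of_col_ne _ _ (Ne.symm hst),
        Matrix.single_apply_of_row_ne (fun h => hik2 h.symm)]
      by_cases hi1 : i' = s
      · subst hi1
        rw [Matrix.single_apply_same, ← hβ]
        abel
      · rw [Matrix.single_apply_of_row_ne (fun h => hi1 h.symm)]
        have hx0 : x i' s = 0 := by
          apply hoff i' s hi1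
          rintro ⟨h1, _⟩; exact hik2 h1
        rw [hx0]
        abel
    rcases not_and_or.mp hc with h | h
    · have hik : k = i := (not_not.mp h).symm
      subst hik
      exact hrowk j
    · have hjs : s = j := (not_not.mp h).symm
      subst hjs
      by_cases hik : i = k
      · have hik' : k = i := hik.symm
        subst hik'
        exact hrowk s
      · exact hcols i hik
  rw [e1, e2, e3]
  exact single_entry hΔ hdiag hvan hks hkt hst v

end Aux

/-- if a 2-local derivation `Δ : Mₙ(A) → Mₙ(M)` (`n ≥ 3`) vanishes on all
diagonal matrices and on the span of the matrix units, then all off-diagonal entries of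
`Δ x` vanish: `(Δ x)_{ks} = 0` for `k ≠ s`. -/
theorem twoLocal_offdiagonal_entries_zero (n : ℕ) (hn : 3 ≤ n)
    (Δ : Matrix (Fin n) (Fin n) A → Matrix (Fin n) (Fin n) M)
    (hΔ : Is2LocalMatDerivation A M Δ)
    (hdiag : ∀ x ∈ diagSet A n, Δ x = 0)
    (hvan : ∀ t ∈ unitSpan A n, Δ t = 0) :
    ∀ (x : Matrix (Fin n) (Fin n) A) (k s : Fin n), k ≠ s → Δ x k s = 0 := by
  classical
  have hthird : ∀ k s : Fin n, ∃ t : Fin n, t ≠ k ∧ t ≠ s := by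
    intro k s
    by_contra hno
    push_neg at hno
    have hsub : (Finset.univ : Finset (Fin n)) ⊆ {k, s} := by
      intro t _
      by_cases h : t = k
      · simp [h]
      · simp [hno t h]
    have hle := Finset.card_le_card hsub
    have h2 : ({k, s} : Finset (Fin n)).card ≤ 2 := by
      apply le_trans (Finset.card_insert_le _ _)
      simp
    rw [Finset.card_univ, Fintype.card_fin] at hle
    omega
  have key : ∀ N : ℕ, ∀ z : Matrix (Fin n) (Fin n) A,
      (Finset.univ.filter fun p : Fin n × Fin n => p.1 ≠ p.2 ∧ z p.1 p.2 ≠ 0).card ≤ N →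
      ∀ k s : Fin n, k ≠ s → Δ z k s = 0 := by
    intro N
    induction N with
    | zero =>
      intro z hz k s hks
      have hzdiag : z ∈ diagSet A n := by
        intro i j hij
        by_contra h0
        have hmem : (⟨i, j⟩ : Fin n × Fin n) ∈ Finset.univ.filter
            (fun p : Fin n × Fin n => p.1 ≠ p.2 ∧ z p.1 p.2 ≠ 0) := by
          simp only [Finset.mem_filter]
          exact ⟨Finset.mem_univ _, hij, h0⟩
        have hpos := Finset.card_pos.mpr ⟨_, hmem⟩
        omega
      rw [hdiag z hzdiag]
      simp
    | succ N ih =>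
      intro z hz k s hks
      by_cases hex : ∃ p : Fin n × Fin n, p.1 ≠ p.2 ∧ p ≠ (k, s) ∧ z p.1 p.2 ≠ 0
      · obtain ⟨⟨i0, j0⟩, hij, hpne, hzne⟩ := hex
        have hdrop : ∀ z' : Matrix (Fin n) (Fin n) A, z' i0 j0 = 0 →
            (∀ p : Fin n × Fin n, p.1 ≠ p.2 → p ≠ (i0, j0) → z' p.1 p.2 = z p.1 p.2) →
            (Finset.univ.filter fun p : Fin n × Fin n =>
              p.1 ≠ p.2 ∧ z' p.1 p.2 ≠ 0).card ≤ N := by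
          intro z' h0 hsame
          have hsubset : (Finset.univ.filter fun p : Fin n × Fin n =>
              p.1 ≠ p.2 ∧ z' p.1 p.2 ≠ 0)
              ⊆ (Finset.univ.filter fun p : Fin n × Fin n =>
                p.1 ≠ p.2 ∧ z p.1 p.2 ≠ 0).erase (i0, j0) := by
            intro p hp
            rw [Finset.mem_filter] at hp
            have hpne2 : p ≠ (i0, j0) := by
              rintro rfl
              exact hp.2.2 h0
            rw [Finset.mem_erase, Finset.mem_filter]
            refine ⟨hpne2, Finset.mem_univ _, hp.2.1, ?_⟩
            rw [← hsame p hp.2.1 hpne2]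
            exact hp.2.2
          have hmem : ((i0, j0) : Fin n × Fin n) ∈ Finset.univ.filter
              (fun p : Fin n × Fin n => p.1 ≠ p.2 ∧ z p.1 p.2 ≠ 0) := by
            simp only [Finset.mem_filter]
            exact ⟨Finset.mem_univ _, hij, hzne⟩
          have hcard := Finset.card_le_card hsubset
          rw [Finset.card_erase_of_mem hmem] at hcard
          omega
        by_cases hi : i0 = k
        · have hi' : k = i0 := hi.symm
          subst hi'
          have hj0s : j0 ≠ s := by
            intro h
            exact hpne (by rw [h])
          set z' := z - (Matrix.single k j0 (z k j0) + Matrix.single j0 j0 (z k j0))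
            with hz'
          have hz'entry : z' k j0 = 0 := by
            rw [hz', Matrix.sub_apply, Matrix.add_apply, Matrix.single_apply_same,
              Matrix.single_apply_of_row_ne (Ne.symm hij)]
            abel
          have hz'same : ∀ p : Fin n × Fin n, p.1 ≠ p.2 → p ≠ (k, j0) →
              z' p.1 p.2 = z p.1 p.2 := by
            rintro ⟨a, b⟩ hab hpne3
            rw [hz', Matrix.sub_apply, Matrix.add_apply]
            have h1 : Matrix.single k j0 (z k j0) a b = 0 := by
              apply Matrix.single_apply_of_ne
              rintro ⟨rfl, rfl⟩
              exact hpne3 rfl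
            have h2 : Matrix.single j0 j0 (z k j0) a b = 0 := by
              apply Matrix.single_apply_of_ne
              rintro ⟨rfl, rfl⟩
              exact hab rfl
            rw [h1, h2]
            abel
          have hcz' := hdrop z' hz'entry hz'same
          have h1 : Δ z' k s = 0 := ih z' hcz' k s hks
          have h2 : Δ z' j0 s = 0 := ih z' hcz' j0 s hj0s
          have h3 : Δ z j0 s = 0 := by
            have hl : Δ z j0 s = Δ (z - Matrix.single k j0 (z k j0)) j0 s := by
              apply link_entry hΔ
              intro a b hne
              have hstd : Matrix.single k j0 (z k j0) a b ≠ 0 := by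
                intro h0
                apply hne
                rw [Matrix.sub_apply, h0, sub_zero]
              have hab : a = k ∧ b = j0 := by
                by_contra hcc
                apply hstd
                apply Matrix.single_apply_of_ne
                rintro ⟨hh1, hh2⟩
                exact hcc ⟨hh1.symm, hh2.symm⟩
              obtain ⟨rfl, rfl⟩ := hab
              exact ⟨hij, hj0s⟩
            rw [hl]
            apply ih _ _ j0 s hj0s
            apply hdrop
            · rw [Matrix.sub_apply, Matrix.single_apply_same]
              abel
            · rintro ⟨a, b⟩ hab hpne3
              rw [Matrix.sub_apply]
              have h1 : Matrix.single k j0 (z k j0) a b = 0 := by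
                apply Matrix.single_apply_of_ne
                rintro ⟨rfl, rfl⟩
                exact hpne3 rfl
              rw [h1]
              abel
          have rel := relPM_row hΔ (Ne.symm hij) hj0s z (z k j0)
          rw [← hz'] at rel
          rw [h1, h2, h3, sub_zero, sub_zero] at rel
          exact rel
        · by_cases hj : j0 = s
          · have hj' : s = j0 := hj.symm
            subst hj'
            set z' := z - (Matrix.single i0 s (z i0 s) + Matrix.single i0 i0 (z i0 s))
              with hz'
            have hz'entry : z' i0 s = 0 := by
              rw [hz', Matrix.sub_apply, Matrix.add_apply, Matrix.single_apply_same,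
                Matrix.single_apply_of_col_ne _ _ hij]
              abel
            have hz'same : ∀ p : Fin n × Fin n, p.1 ≠ p.2 → p ≠ (i0, s) →
                z' p.1 p.2 = z p.1 p.2 := by
              rintro ⟨a, b⟩ hab hpne3
              rw [hz', Matrix.sub_apply, Matrix.add_apply]
              have h1 : Matrix.single i0 s (z i0 s) a b = 0 := by
                apply Matrix.single_apply_of_ne
                rintro ⟨rfl, rfl⟩
                exact hpne3 rfl
              have h2 : Matrix.single i0 i0 (z i0 s) a b = 0 := by
                apply Matrix.single_apply_of_ne
                rintro ⟨rfl, rfl⟩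
                exact hab rfl
              rw [h1, h2]
              abel
            have hcz' := hdrop z' hz'entry hz'same
            have h1 : Δ z' k s = 0 := ih z' hcz' k s hks
            have h2 : Δ z' k i0 = 0 := ih z' hcz' k i0 (Ne.symm hi)
            have h3 : Δ z k i0 = 0 := by
              have hl : Δ z k i0 = Δ (z - Matrix.single i0 s (z i0 s)) k i0 := by
                apply link_entry hΔ
                intro a b hne
                have hstd : Matrix.single i0 s (z i0 s) a b ≠ 0 := by
                  intro h0
                  apply hne
                  rw [Matrix.sub_apply, h0, sub_zero]
                have hab : a = i0 ∧ b = s := by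
                  by_contra hcc
                  apply hstd
                  apply Matrix.single_apply_of_ne
                  rintro ⟨hh1, hh2⟩
                  exact hcc ⟨hh1.symm, hh2.symm⟩
                obtain ⟨rfl, rfl⟩ := hab
                exact ⟨hi, Ne.symm hij⟩
              rw [hl]
              apply ih _ _ k i0 (Ne.symm hi)
              apply hdrop
              · rw [Matrix.sub_apply, Matrix.single_apply_same]
                abel
              · rintro ⟨a, b⟩ hab hpne3
                rw [Matrix.sub_apply]
                have h1 : Matrix.single i0 s (z i0 s) a b = 0 := by
                  apply Matrix.single_apply_of_ne
                  rintro ⟨rfl, rfl⟩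
                  exact hpne3 rfl
                rw [h1]
                abel
            have rel := relPM_col hΔ hi hij z (z i0 s)
            rw [← hz'] at rel
            rw [h1, h2, h3, sub_zero, sub_zero] at rel
            exact rel
          · have hl : Δ z k s = Δ (z - Matrix.single i0 j0 (z i0 j0)) k s := by
              apply link_entry hΔ
              intro a b hne
              have hstd : Matrix.single i0 j0 (z i0 j0) a b ≠ 0 := by
                intro h0
                apply hne
                rw [Matrix.sub_apply, h0, sub_zero]
              have hab : a = i0 ∧ b = j0 := by
                by_contra hcc
                apply hstd
                apply Matrix.single_apply_of_ne
                rintro ⟨hh1, hh2⟩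
                exact hcc ⟨hh1.symm, hh2.symm⟩
              obtain ⟨rfl, rfl⟩ := hab
              exact ⟨hi, hj⟩
            rw [hl]
            apply ih _ _ k s hks
            apply hdrop
            · rw [Matrix.sub_apply, Matrix.single_apply_same]
              abel
            · rintro ⟨a, b⟩ hab hpne3
              rw [Matrix.sub_apply]
              have h1 : Matrix.single i0 j0 (z i0 j0) a b = 0 := by
                apply Matrix.single_apply_of_ne
                rintro ⟨rfl, rfl⟩
                exact hpne3 rfl
              rw [h1]
              abel
      · push_neg at hex
        obtain ⟨t, htk, hts⟩ := hthird k s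
        apply stub hΔ hdiag hvan hks (Ne.symm htk) (Ne.symm hts) z
        intro i j hij hc
        apply hex ⟨i, j⟩ hij
        intro hp
        apply hc
        simpa [Prod.ext_iff] using hp
  intro x k s hks
  exact key _ x le_rfl k s hks
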